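/- Let p be a prime and q ∈ (0,1). Then P_q(p²) = (q^p + (1−q)^p)^p + ∑_{k=0}^{p} φ_q(k,p)^p − q^{p²} − (1−q)^{p²}. -/

import Mathlib

open Finset

/-- The binomial probability mass function. -/
noncomputable def phi (q : ℝ) (k n : ℕ) : ℝ :=
  (n.choose k : ℝ) * q ^ k * (1 - q) ^ (n - k)

/-- The Bernoulli(q) probability weight of an outcome `c : Fin n → Bool`. -/
noncomputable def bernWeight (q : ℝ) (n : ℕ) (c : Fin n → Bool) : ℝ :=
  q ^ (Finset.univ.filter (fun j => c j = true)).card *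
    (1 - q) ^ (n - (Finset.univ.filter (fun j => c j = true)).card)

/-- Singularity probability of an `n × n` circulant Bernoulli(q) matrix (0/1 entries). -/
noncomputable def Pq (q : ℝ) (n : ℕ) : ℝ :=
  ∑ c : Fin n → Bool,
    if (Matrix.of fun i j : Fin n => (if c (j - i) then (1 : ℚ) else 0)).det = 0 then
      bernWeight q n c
    else 0


open Finset Polynomial

namespace PqAux

noncomputable def fz {n : ℕ} (c : Fin n → Bool) (z : ℂ) : ℂ :=
  ∑ m : Fin n, (if c m then (1:ℂ) else 0) * z ^ (m : ℕ)

lemma pow_mod_eq {n : ℕ} {z : ℂ} (hz : z ^ n = 1) {a b : ℕ} (hab : a ≡ b [MOD n]) :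
    z ^ a = z ^ b := by
  rcases eq_or_ne n 0 with rfl | hn
  · have : a = b := by simpa [Nat.ModEq] using hab
    rw [this]
  · have ha := Nat.div_add_mod a n
    have hb := Nat.div_add_mod b n
    have : a % n = b % n := hab
    calc z ^ a = z ^ (n * (a / n) + a % n) := by rw [ha]
      _ = (z ^ n) ^ (a / n) * z ^ (a % n) := by rw [pow_add, pow_mul]
      _ = z ^ (b % n) := by rw [hz, one_pow, one_mul, this]
      _ = (z ^ n) ^ (b / n) * z ^ (b % n) := by rw [hz, one_pow, one_mul]
      _ = z ^ b := by rw [← pow_mul, ← pow_add, hb]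

lemma det_circ_eq_zero_iff {n : ℕ} (hn : 0 < n) (c : Fin n → Bool) :
    (Matrix.of fun i j : Fin n => (if c (j - i) then (1 : ℚ) else 0)).det = 0 ↔
      ∃ z : ℂ, z ^ n = 1 ∧ fz c z = 0 := by
  haveI : NeZero n := ⟨hn.ne'⟩
  set ζ : ℂ := Complex.exp (2 * Real.pi * Complex.I / n) with hζdef
  have hζ : IsPrimitiveRoot ζ n := Complex.isPrimitiveRoot_exp n hn.ne'
  have hζ1 : ζ ^ n = 1 := hζ.pow_eq_one
  set M : Matrix (Fin n) (Fin n) ℂ :=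
    Matrix.of fun i j : Fin n => (if c (j - i) then (1 : ℂ) else 0) with hM
  set V : Matrix (Fin n) (Fin n) ℂ := Matrix.vandermonde (fun i : Fin n => ζ ^ (i : ℕ)) with hV
  have hMV : M * V = V * Matrix.diagonal (fun k : Fin n => fz c (ζ ^ (k : ℕ))) := by
    ext i k
    rw [Matrix.mul_apply, Matrix.mul_diagonal]
    calc ∑ j : Fin n, M i j * V j k
        = ∑ m : Fin n, M i (i + m) * V (i + m) k :=
          (Fintype.sum_equiv (Equiv.addLeft i) _ _ (fun m => rfl)).symm
      _ = ∑ m : Fin n, (if c m then (1:ℂ) else 0) * ζ ^ ((i:ℕ) * (k:ℕ)) * ζ ^ ((m:ℕ) * (k:ℕ)) := by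
          refine Finset.sum_congr rfl fun m _ => ?_
          have h1 : (i + m) - i = m := add_sub_cancel_left i m
          have h2 : V (i + m) k = ζ ^ ((i:ℕ) * (k:ℕ)) * ζ ^ ((m:ℕ) * (k:ℕ)) := by
            rw [hV, Matrix.vandermonde]
            have : ((i + m : Fin n) : ℕ) ≡ (i:ℕ) + (m:ℕ) [MOD n] := by
              rw [Fin.val_add]
              exact (Nat.mod_modEq _ n)
            calc (ζ ^ ((i + m : Fin n) : ℕ)) ^ (k:ℕ) = ζ ^ (((i + m : Fin n) : ℕ) * (k:ℕ)) := by
                  rw [pow_mul]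
              _ = ζ ^ (((i:ℕ) + (m:ℕ)) * (k:ℕ)) := pow_mod_eq hζ1 (this.mul_right _)
              _ = ζ ^ ((i:ℕ) * (k:ℕ)) * ζ ^ ((m:ℕ) * (k:ℕ)) := by rw [← pow_add, ← add_mul]
          rw [h1] at *
          rw [hM]
          simp only [Matrix.of_apply, h2, add_sub_cancel_left]
          ring
      _ = V i k * fz c (ζ ^ (k : ℕ)) := by
          rw [fz, Finset.mul_sum]
          refine Finset.sum_congr rfl fun m _ => ?_
          rw [hV, Matrix.vandermonde]
          simp only [Matrix.of_apply]
          rw [← pow_mul, ← pow_mul, mul_comm ((m:ℕ)) ((k:ℕ)), pow_mul ζ (k:ℕ)]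
          ring
  have hVdet : V.det ≠ 0 := by
    rw [hV, Matrix.det_vandermonde_ne_zero_iff]
    intro a b hab
    exact Fin.ext (hζ.pow_inj a.isLt b.isLt hab)
  have hdet : M.det = ∏ k : Fin n, fz c (ζ ^ (k : ℕ)) := by
    have := congrArg Matrix.det hMV
    rw [Matrix.det_mul, Matrix.det_mul, Matrix.det_diagonal, mul_comm V.det] at this
    exact mul_right_cancel₀ hVdet this
  have hmap : ((algebraMap ℚ ℂ).mapMatrix
      (Matrix.of fun i j : Fin n => (if c (j - i) then (1 : ℚ) else 0))) = M := by
    ext i j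
    by_cases h : c (j - i) <;> simp [h, hM]
  constructor
  · intro h0
    have : M.det = 0 := by
      rw [← hmap, ← RingHom.map_det, h0, map_zero]
    rw [hdet, Finset.prod_eq_zero_iff] at this
    obtain ⟨k, -, hk⟩ := this
    exact ⟨ζ ^ (k:ℕ), by rw [← pow_mul, mul_comm, pow_mul, hζ1, one_pow], hk⟩
  · rintro ⟨z, hz1, hz2⟩
    obtain ⟨k, hk, rfl⟩ := hζ.eq_pow_of_pow_eq_one hz1
    have : M.det = 0 := by
      rw [hdet]
      refine Finset.prod_eq_zero (Finset.mem_univ (⟨k, hk⟩ : Fin n)) ?_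
      simpa using hz2
    rw [← hmap, ← RingHom.map_det] at this
    exact (map_eq_zero_iff _ (algebraMap ℚ ℂ).injective).mp this

def idx {p : ℕ} (v t : Fin p) : Fin (p ^ 2) :=
  ⟨(v : ℕ) + p * (t : ℕ), by
    have hv := v.isLt; have ht := t.isLt
    calc (v : ℕ) + p * t < p + p * t := by omega
      _ = p * (t + 1) := by ring
      _ ≤ p * p := Nat.mul_le_mul_left p ht
      _ = p ^ 2 := (sq p).symm⟩

def pairEquiv (p : ℕ) : Fin p × Fin p ≃ Fin (p ^ 2) :=
  finProdFinEquiv.trans (finCongr (sq p).symm)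

lemma pairEquiv_apply {p : ℕ} (x : Fin p × Fin p) : pairEquiv p x = idx x.2 x.1 := by
  apply Fin.ext
  simp [pairEquiv, idx, finProdFinEquiv]

/-- The polynomial with coefficients `r`. -/
noncomputable def poly {n : ℕ} (r : Fin n → ℚ) : ℚ[X] :=
  ∑ m : Fin n, C (r m) * X ^ (m : ℕ)

lemma poly_coeff {n : ℕ} (r : Fin n → ℚ) (m : Fin n) : (poly r).coeff (m : ℕ) = r m := by
  rw [poly, finset_sum_coeff]
  rw [Finset.sum_eq_single m]
  · simp
  · intro b _ hb
    rw [coeff_C_mul, coeff_X_pow, if_neg (fun h => hb (Fin.ext h.symm)), mul_zero]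
  · simp

lemma poly_degree_lt {n : ℕ} (hn : 0 < n) (r : Fin n → ℚ) : (poly r).degree < n := by
  refine lt_of_le_of_lt (degree_sum_le _ _) ?_
  rw [Finset.sup_lt_iff (by exact_mod_cast WithBot.bot_lt_coe n)]
  intro m _
  refine lt_of_le_of_lt (degree_C_mul_X_pow_le _ _) ?_
  exact_mod_cast m.isLt

lemma poly_aeval {n : ℕ} (r : Fin n → ℚ) (z : ℂ) :
    aeval z (poly r) = ∑ m : Fin n, (r m : ℂ) * z ^ (m : ℕ) := by
  rw [poly, map_sum]
  refine Finset.sum_congr rfl fun m _ => ?_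
  simp [eq_ratCast (algebraMap ℚ ℂ)]

/-- Key lemma for primitive p-th roots: a rational combination of powers vanishes iff
all coefficients are equal. -/
lemma sum_primroot_p_eq_zero_iff {p : ℕ} (hp : p.Prime) {w : ℂ} (hw : IsPrimitiveRoot w p)
    (a : Fin p → ℚ) :
    (∑ r : Fin p, (a r : ℂ) * w ^ (r : ℕ)) = 0 ↔ ∀ r, a r = a ⟨0, hp.pos⟩ := by
  have hgeom : (∑ r : Fin p, (w ^ (r : ℕ) : ℂ)) = 0 := by
    rw [Fin.sum_univ_eq_sum_range]
    exact hw.geom_sum_eq_zero hp.one_lt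
  constructor
  · intro h
    set z0 : Fin p := ⟨0, hp.pos⟩
    set b : Fin p → ℚ := fun r => a r - a z0 with hb
    have hzero : (∑ r : Fin p, (b r : ℂ) * w ^ (r : ℕ)) = 0 := by
      have : (∑ r : Fin p, (b r : ℂ) * w ^ (r : ℕ))
          = (∑ r : Fin p, (a r : ℂ) * w ^ (r : ℕ)) - (a z0 : ℚ) * ∑ r : Fin p, (w ^ (r : ℕ) : ℂ) := by
        rw [Finset.mul_sum, ← Finset.sum_sub_distrib]
        refine Finset.sum_congr rfl fun r _ => ?_
        push_cast [hb]
        ring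
      rw [this, h, hgeom]
      ring
    have hdvd : minpoly ℚ w ∣ poly b := minpoly.dvd ℚ w (by rw [poly_aeval]; exact hzero)
    rw [← cyclotomic_eq_minpoly_rat hw hp.pos] at hdvd
    obtain ⟨u, hu⟩ := hdvd
    have hpolyb : poly b = 0 := by
      by_contra hne
      have hcycne : cyclotomic p ℚ ≠ 0 := cyclotomic_ne_zero p ℚ
      have hune : u ≠ 0 := by rintro rfl; rw [mul_zero] at hu; exact hne hu
      have hnd : (poly b).natDegree = (cyclotomic p ℚ).natDegree + u.natDegree := by
        rw [hu, natDegree_mul hcycne hune]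
      have hndlt : (poly b).natDegree < p := by
        have := poly_degree_lt hp.pos b
        exact natDegree_lt_iff_degree_lt hne |>.mpr this
      rw [hnd, natDegree_cyclotomic, Nat.totient_prime hp] at hndlt
      have hu0 : u.natDegree = 0 := by omega
      obtain ⟨c0, rfl⟩ : ∃ c0, u = C c0 := ⟨u.coeff 0, eq_C_of_natDegree_eq_zero hu0⟩
      have hc0 : c0 = 0 := by
        have h0 : (poly b).coeff 0 = b z0 := by
          have := poly_coeff b z0
          simpa using this
        have hbz : b z0 = 0 := by simp [hb]
        have hczero : (cyclotomic p ℚ).coeff 0 * (C c0).coeff 0 = 0 := by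
          rw [← mul_coeff_zero, ← hu, h0, hbz]
        rw [cyclotomic_coeff_zero ℚ hp.one_lt, one_mul, coeff_C_zero] at hczero
        exact hczero
      rw [hc0, map_zero, mul_zero] at hu
      exact hne hu
    intro r
    have hcr := poly_coeff b r
    rw [hpolyb, coeff_zero] at hcr
    have hbr : b r = 0 := hcr.symm
    have : a r - a z0 = 0 := hbr
    linarith
  · intro h
    calc (∑ r : Fin p, (a r : ℂ) * w ^ (r : ℕ))
        = ∑ r : Fin p, (a ⟨0, hp.pos⟩ : ℂ) * w ^ (r : ℕ) := by
          refine Finset.sum_congr rfl fun r _ => ?_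
          rw [h r]
      _ = (a ⟨0, hp.pos⟩ : ℂ) * ∑ r : Fin p, (w ^ (r : ℕ) : ℂ) := by rw [Finset.mul_sum]
      _ = 0 := by rw [hgeom, mul_zero]


lemma sum_primroot_p2_eq_zero_iff {p : ℕ} (hp : p.Prime) {w : ℂ}
    (hw : IsPrimitiveRoot w (p ^ 2)) (r : Fin (p ^ 2) → ℚ) :
    (∑ m : Fin (p ^ 2), (r m : ℂ) * w ^ (m : ℕ)) = 0 ↔
      ∀ v t : Fin p, r (idx v t) = r (idx v ⟨0, hp.pos⟩) := by
  have hp2 : 0 < p ^ 2 := pow_pos hp.pos 2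
  have hwp : IsPrimitiveRoot (w ^ p) p := hw.pow hp2 (sq p)
  have hgeom : (∑ t : Fin p, ((w ^ p) ^ (t : ℕ) : ℂ)) = 0 := by
    rw [Fin.sum_univ_eq_sum_range]
    exact hwp.geom_sum_eq_zero hp.one_lt
  have hval : ∀ v t : Fin p, ((idx v t : Fin (p ^ 2)) : ℕ) = (v : ℕ) + p * (t : ℕ) :=
    fun v t => rfl
  constructor
  · intro h
    have hdvd : minpoly ℚ w ∣ poly r := minpoly.dvd ℚ w (by rw [poly_aeval]; exact h)
    rw [← cyclotomic_eq_minpoly_rat hw hp2] at hdvd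
    obtain ⟨u, hu⟩ := hdvd
    by_cases hzero : poly r = 0
    · intro v t
      have h1 := poly_coeff r (idx v t)
      have h2 := poly_coeff r (idx v ⟨0, hp.pos⟩)
      rw [hzero, coeff_zero] at h1 h2
      rw [← h1, ← h2]
    · have hcycne : cyclotomic (p ^ 2) ℚ ≠ 0 := cyclotomic_ne_zero _ ℚ
      have hune : u ≠ 0 := by rintro rfl; rw [mul_zero] at hu; exact hzero hu
      have hndlt : (poly r).natDegree < p ^ 2 :=
        natDegree_lt_iff_degree_lt hzero |>.mpr (poly_degree_lt hp2 r)
      have hnd : (poly r).natDegree = (cyclotomic (p ^ 2) ℚ).natDegree + u.natDegree := by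
        rw [hu, natDegree_mul hcycne hune]
      have hple : p ≤ p ^ 2 := Nat.le_self_pow (by norm_num) p
      have hcycdeg : (cyclotomic (p ^ 2) ℚ).natDegree = p ^ 2 - p := by
        rw [natDegree_cyclotomic, Nat.totient_prime_pow hp (by norm_num : 0 < 2), pow_one]
        zify [hp.pos, hple]
        ring
      have hudeg : u.natDegree < p := by omega
      have hcyc : cyclotomic (p ^ 2) ℚ = ∑ i ∈ Finset.range p, X ^ (p * i) := by
        have h21 : p ^ 2 = p ^ (1 + 1) := by norm_num
        rw [h21, cyclotomic_prime_pow_eq_geom_sum hp]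
        refine Finset.sum_congr rfl fun i _ => ?_
        rw [← pow_mul, pow_one]
      have hcoeff : ∀ v t : Fin p, (poly r).coeff ((v : ℕ) + p * (t : ℕ)) = u.coeff (v : ℕ) := by
        intro v t
        rw [hu, hcyc, Finset.sum_mul, finset_sum_coeff]
        have hterm : ∀ i, (X ^ (p * i) * u).coeff ((v : ℕ) + p * (t : ℕ))
            = if p * i ≤ (v : ℕ) + p * (t : ℕ) then u.coeff ((v : ℕ) + p * (t : ℕ) - p * i)
              else 0 := by
          intro i
          rw [mul_comm (X ^ (p * i)) u, coeff_mul_X_pow']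
        simp only [hterm]
        rw [Finset.sum_eq_single (t : ℕ)
          (fun i _ hne => ?_) (fun habs => absurd (Finset.mem_range.mpr t.isLt) habs)]
        · rw [if_pos (by omega), Nat.add_sub_cancel]
        · rcases lt_or_gt_of_ne hne with hlt | hgt
          · have hkey : p * i + p ≤ p * (t : ℕ) := by
              have h1 : i + 1 ≤ (t : ℕ) := hlt
              calc p * i + p = p * (i + 1) := by ring
                _ ≤ p * (t : ℕ) := Nat.mul_le_mul_left p h1
            rw [if_pos (by omega)]
            exact coeff_eq_zero_of_natDegree_lt (by omega)
          · have hkey : p * (t : ℕ) + p ≤ p * i := by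
              have h1 : (t : ℕ) + 1 ≤ i := hgt
              calc p * (t : ℕ) + p = p * ((t : ℕ) + 1) := by ring
                _ ≤ p * i := Nat.mul_le_mul_left p h1
            rw [if_neg (by have := v.isLt; omega)]
      intro v t
      have h1 := poly_coeff r (idx v t)
      have h2 := poly_coeff r (idx v ⟨0, hp.pos⟩)
      rw [hval] at h1 h2
      rw [← h1, ← h2, hcoeff v t, hcoeff v ⟨0, hp.pos⟩]
  · intro h
    calc (∑ m : Fin (p ^ 2), (r m : ℂ) * w ^ (m : ℕ))
        = ∑ x : Fin p × Fin p, (r (pairEquiv p x) : ℂ) * w ^ ((pairEquiv p x : Fin (p ^ 2)) : ℕ) :=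
          (Fintype.sum_equiv (pairEquiv p) _ _ (fun x => rfl)).symm
      _ = ∑ x : Fin p × Fin p,
            (r (idx x.2 x.1) : ℂ) * w ^ ((x.2 : ℕ)) * ((w ^ p) ^ (x.1 : ℕ)) := by
          refine Finset.sum_congr rfl fun x _ => ?_
          rw [pairEquiv_apply, hval, pow_add, pow_mul]
          ring
      _ = ∑ t : Fin p, ∑ v : Fin p,
            (r (idx v t) : ℂ) * w ^ ((v : ℕ)) * ((w ^ p) ^ (t : ℕ)) :=
          Fintype.sum_prod_type _
      _ = ∑ v : Fin p, ∑ t : Fin p,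
            (r (idx v t) : ℂ) * w ^ ((v : ℕ)) * ((w ^ p) ^ (t : ℕ)) := Finset.sum_comm
      _ = ∑ v : Fin p, (r (idx v ⟨0, hp.pos⟩) : ℂ) * w ^ ((v : ℕ))
            * ∑ t : Fin p, ((w ^ p) ^ (t : ℕ)) := by
          refine Finset.sum_congr rfl fun v _ => ?_
          rw [Finset.mul_sum]
          exact Finset.sum_congr rfl fun t _ => by rw [h v t]
      _ = 0 := by rw [hgeom]; simp


def cnt {p : ℕ} (c : Fin (p ^ 2) → Bool) (v : Fin p) : ℕ :=
  (univ.filter (fun t : Fin p => c (idx v t) = true)).card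

def condB {p : ℕ} (c : Fin (p ^ 2) → Bool) : Prop := ∀ v w : Fin p, cnt c v = cnt c w

def condC {p : ℕ} (c : Fin (p ^ 2) → Bool) : Prop :=
  ∀ v t t' : Fin p, c (idx v t) = c (idx v t')

instance {p : ℕ} (c : Fin (p ^ 2) → Bool) : Decidable (condB c) :=
  inferInstanceAs (Decidable (∀ v w : Fin p, cnt c v = cnt c w))

instance {p : ℕ} (c : Fin (p ^ 2) → Bool) : Decidable (condC c) :=
  inferInstanceAs (Decidable (∀ v t t' : Fin p, c (idx v t) = c (idx v t')))

lemma blockEquiv_symm_apply' {p : ℕ} (d : Fin p → Fin p → Bool) (v t : Fin p) :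
    True := trivial

lemma fz_group {p : ℕ} (hp : 0 < p) (c : Fin (p ^ 2) → Bool) {z : ℂ} (hz : z ^ p = 1) :
    fz c z = ∑ v : Fin p, ((cnt c v : ℚ) : ℂ) * z ^ (v : ℕ) := by
  calc fz c z
      = ∑ x : Fin p × Fin p, (if c (pairEquiv p x) then (1:ℂ) else 0)
          * z ^ ((pairEquiv p x : Fin (p ^ 2)) : ℕ) :=
        (Fintype.sum_equiv (pairEquiv p) _ _ (fun x => rfl)).symm
    _ = ∑ x : Fin p × Fin p, (if c (idx x.2 x.1) then (1:ℂ) else 0) * z ^ ((x.2 : ℕ)) := by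
        refine Finset.sum_congr rfl fun x _ => ?_
        rw [pairEquiv_apply,
          show ((idx x.2 x.1 : Fin (p ^ 2)) : ℕ) = (x.2 : ℕ) + p * (x.1 : ℕ) from rfl,
          pow_add, pow_mul, hz, one_pow, mul_one]
    _ = ∑ t : Fin p, ∑ v : Fin p, (if c (idx v t) then (1:ℂ) else 0) * z ^ ((v : ℕ)) :=
        Fintype.sum_prod_type _
    _ = ∑ v : Fin p, ∑ t : Fin p, (if c (idx v t) then (1:ℂ) else 0) * z ^ ((v : ℕ)) :=
        Finset.sum_comm
    _ = ∑ v : Fin p, ((cnt c v : ℚ) : ℂ) * z ^ (v : ℕ) := by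
        refine Finset.sum_congr rfl fun v _ => ?_
        rw [← Finset.sum_mul]
        congr 1
        rw [Finset.sum_boole, cnt]
        push_cast
        rfl

lemma fz_eq_rr {p : ℕ} (c : Fin (p ^ 2) → Bool) (z : ℂ) :
    fz c z = ∑ m : Fin (p ^ 2), (((if c m then (1:ℚ) else 0) : ℚ) : ℂ) * z ^ (m : ℕ) := by
  refine Finset.sum_congr rfl fun m _ => ?_
  by_cases h : c m <;> simp [h]

lemma roots_iff_BC {p : ℕ} (hp : p.Prime) (c : Fin (p ^ 2) → Bool) :
    (∃ z : ℂ, z ^ (p ^ 2) = 1 ∧ fz c z = 0) ↔ condB c ∨ condC c := by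
  have hp2 : (0:ℕ) < p ^ 2 := pow_pos hp.pos 2
  constructor
  · rintro ⟨z, hz1, hz2⟩
    have hord : orderOf z ∣ p ^ 2 := orderOf_dvd_of_pow_eq_one hz1
    obtain ⟨i, hi2, hoi⟩ := (Nat.dvd_prime_pow hp).mp hord
    interval_cases i
    · -- z = 1
      have hz : z = 1 := orderOf_eq_one_iff.mp (by rw [hoi, pow_zero])
      subst hz
      right
      have hcard : ((univ.filter (fun m : Fin (p ^ 2) => c m = true)).card : ℂ) = 0 := by
        rw [← Finset.sum_boole]
        unfold fz at hz2
        simpa using hz2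
      have hempty : ∀ m : Fin (p ^ 2), c m = false := by
        have h0 : (univ.filter (fun m : Fin (p ^ 2) => c m = true)).card = 0 := by
          exact_mod_cast hcard
        intro m
        by_contra hm
        have : m ∈ univ.filter (fun m : Fin (p ^ 2) => c m = true) := by
          simp [Bool.not_eq_false] at hm
          simp [hm]
        rw [Finset.card_eq_zero] at h0
        simp [h0] at this
      intro v t t'
      rw [hempty, hempty]
    · -- primitive p-th root
      left
      have hzw : IsPrimitiveRoot z p := by
        rw [pow_one] at hoi
        exact hoi ▸ IsPrimitiveRoot.orderOf z
      have hzp : z ^ p = 1 := hzw.pow_eq_one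
      rw [fz_group hp.pos c hzp] at hz2
      have hall := (sum_primroot_p_eq_zero_iff hp hzw (fun v => (cnt c v : ℚ))).mp hz2
      intro v w
      have h1 := hall v
      have h2 := hall w
      have : (cnt c v : ℚ) = (cnt c w : ℚ) := by rw [h1, h2]
      exact_mod_cast this
    · -- primitive p^2-th root
      right
      have hzw : IsPrimitiveRoot z (p ^ 2) := hoi ▸ IsPrimitiveRoot.orderOf z
      rw [fz_eq_rr] at hz2
      have hall := (sum_primroot_p2_eq_zero_iff hp hzw (fun m => if c m then (1:ℚ) else 0)).mp hz2
      intro v t t'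
      have h1 := hall v t
      have h2 := hall v t'
      have h3 : (if c (idx v t) then (1:ℚ) else 0) = (if c (idx v t') then (1:ℚ) else 0) := by
        rw [h1, h2]
      by_cases ha : c (idx v t) <;> by_cases hb : c (idx v t')
      · rw [ha, hb]
      · rw [ha, if_pos rfl] at h3; rw [Bool.not_eq_true] at hb
        rw [hb, if_neg (by simp [hb])] at h3; norm_num at h3
      · rw [Bool.not_eq_true] at ha
        rw [ha, if_neg (by simp [ha]), hb, if_pos rfl] at h3; norm_num at h3
      · rw [Bool.not_eq_true] at ha hb; rw [ha, hb]
  · rintro (hB | hC)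
    · obtain ⟨w, hw⟩ : ∃ w : ℂ, IsPrimitiveRoot w p :=
        ⟨_, Complex.isPrimitiveRoot_exp p hp.pos.ne'⟩
      refine ⟨w, ?_, ?_⟩
      · rw [sq, pow_mul, hw.pow_eq_one, one_pow]
      · rw [fz_group hp.pos c hw.pow_eq_one]
        refine (sum_primroot_p_eq_zero_iff hp hw (fun v => (cnt c v : ℚ))).mpr fun v => ?_
        exact_mod_cast hB v ⟨0, hp.pos⟩
    · obtain ⟨w, hw⟩ : ∃ w : ℂ, IsPrimitiveRoot w (p ^ 2) :=
        ⟨_, Complex.isPrimitiveRoot_exp _ hp2.ne'⟩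
      refine ⟨w, hw.pow_eq_one, ?_⟩
      rw [fz_eq_rr]
      refine (sum_primroot_p2_eq_zero_iff hp hw (fun m => if c m then (1:ℚ) else 0)).mpr
        fun v t => ?_
      rw [hC v t ⟨0, hp.pos⟩]


lemma prod_ite_weight (q : ℝ) {n : ℕ} (c : Fin n → Bool) :
    bernWeight q n c = ∏ m : Fin n, (if c m then q else 1 - q) := by
  rw [bernWeight, Finset.prod_ite, Finset.prod_const, Finset.prod_const]
  have h := Finset.card_filter_add_card_filter_not (s := (univ : Finset (Fin n)))
    (p := fun j => c j = true)
  rw [Finset.card_univ, Fintype.card_fin] at h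
  congr 2
  omega

def boolEquiv {n : ℕ} : (Fin n → Bool) ≃ Finset (Fin n) where
  toFun b := univ.filter (fun a => b a = true)
  invFun s := fun a => decide (a ∈ s)
  left_inv b := by funext a; by_cases h : b a <;> simp [h]
  right_inv s := by ext a; simp

lemma sum_count_eq (q : ℝ) {n : ℕ} (k : ℕ) :
    (∑ b : Fin n → Bool, if (univ.filter (fun t => b t = true)).card = k
        then q ^ k * (1 - q) ^ (n - k) else 0)
      = (n.choose k) * (q ^ k * (1 - q) ^ (n - k)) := by
  rw [← Equiv.sum_comp (boolEquiv (n := n)).symm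
    (fun b => if (univ.filter (fun t => b t = true)).card = k
      then q ^ k * (1 - q) ^ (n - k) else 0)]
  have hcard : ∀ s : Finset (Fin n),
      (univ.filter (fun t => (boolEquiv.symm s) t = true)).card = s.card := by
    intro s
    congr 1
    ext a
    simp [boolEquiv]
  have : ∀ s : Finset (Fin n),
      (if (univ.filter (fun t => (boolEquiv.symm s) t = true)).card = k
        then q ^ k * (1 - q) ^ (n - k) else 0)
      = (if s.card = k then q ^ k * (1 - q) ^ (n - k) else 0) := by
    intro s
    rw [hcard]
  rw [Finset.sum_congr rfl (fun s _ => this s)]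
  rw [← Finset.sum_filter]
  rw [Finset.sum_const]
  have hfilt : (univ : Finset (Finset (Fin n))).filter (fun s => s.card = k)
      = Finset.powersetCard k univ := by
    ext s
    simp [Finset.mem_powersetCard, Finset.subset_univ]
  rw [hfilt, Finset.card_powersetCard, Finset.card_univ, Fintype.card_fin, nsmul_eq_mul]

def blockEquiv (p : ℕ) : (Fin (p ^ 2) → Bool) ≃ (Fin p → Fin p → Bool) where
  toFun c := fun v t => c (idx v t)
  invFun d := fun m => d ((pairEquiv p).symm m).2 ((pairEquiv p).symm m).1
  left_inv c := by
    funext m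
    have h : pairEquiv p ((pairEquiv p).symm m) = m := Equiv.apply_symm_apply _ _
    conv_rhs => rw [← h, pairEquiv_apply]
  right_inv d := by
    funext v t
    have h : (pairEquiv p).symm (idx v t) = (t, v) := by
      rw [← pairEquiv_apply (t, v)]
      exact Equiv.symm_apply_apply _ _
    simp [h]

lemma sum_prod_swap {ι κ : Type*} [Fintype ι] [Fintype κ] [DecidableEq ι] (G : ι → κ → ℝ) :
    (∑ d : ι → κ, ∏ v : ι, G v (d v)) = ∏ v : ι, ∑ y : κ, G v y := by
  rw [show (univ : Finset (ι → κ)) = Fintype.piFinset fun _ : ι => (univ : Finset κ) from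
    (Fintype.piFinset_univ).symm]
  exact (Finset.prod_univ_sum _ _).symm

lemma blockEquiv_symm_apply {p : ℕ} (d : Fin p → Fin p → Bool) (v t : Fin p) :
    ((blockEquiv p).symm d) (idx v t) = d v t :=
  congrFun (congrFun (Equiv.apply_symm_apply (blockEquiv p) d) v) t

lemma ite_forall_prod {α : Type*} [Fintype α] (P : α → Prop) [DecidablePred P]
    [Decidable (∀ a, P a)] (f : α → ℝ) :
    (if (∀ a, P a) then ∏ a, f a else 0) = ∏ a, if P a then f a else 0 := by
  by_cases h : ∀ a, P a
  · rw [if_pos h]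
    exact Finset.prod_congr rfl fun a _ => (if_pos (h a)).symm
  · rw [if_neg h]
    push_neg at h
    obtain ⟨a, ha⟩ := h
    exact (Finset.prod_eq_zero (mem_univ a)
      (show (if P a then f a else 0) = 0 from if_neg ha)).symm

lemma bernWeight_block (q : ℝ) {p : ℕ} (d : Fin p → Fin p → Bool) :
    bernWeight q (p ^ 2) ((blockEquiv p).symm d)
      = ∏ v : Fin p, ∏ t : Fin p, (if d v t then q else 1 - q) := by
  have happ : ∀ v t : Fin p, ((blockEquiv p).symm d) (idx v t) = d v t :=
    fun v t => blockEquiv_symm_apply d v t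
  rw [prod_ite_weight]
  calc (∏ m : Fin (p ^ 2), (if ((blockEquiv p).symm d) m then q else 1 - q))
      = ∏ x : Fin p × Fin p, (if ((blockEquiv p).symm d) (pairEquiv p x) then q else 1 - q) :=
        (Equiv.prod_comp (pairEquiv p) _).symm
    _ = ∏ x : Fin p × Fin p, (if d x.2 x.1 then q else 1 - q) := by
        refine Finset.prod_congr rfl fun x _ => ?_
        rw [pairEquiv_apply, happ]
    _ = ∏ t : Fin p, ∏ v : Fin p, (if d v t then q else 1 - q) := Fintype.prod_prod_type _
    _ = ∏ v : Fin p, ∏ t : Fin p, (if d v t then q else 1 - q) := Finset.prod_comm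

lemma cnt_block {p : ℕ} (d : Fin p → Fin p → Bool) (v : Fin p) :
    cnt ((blockEquiv p).symm d) v = (univ.filter (fun t => d v t = true)).card := by
  unfold cnt
  congr 1
  ext t
  simp only [Finset.mem_filter, blockEquiv_symm_apply]

set_option maxHeartbeats 1600000 in
lemma sum_condC (q : ℝ) {p : ℕ} (hp : 0 < p) :
    (∑ c : Fin (p ^ 2) → Bool, if condC c then bernWeight q (p ^ 2) c else 0)
      = (q ^ p + (1 - q) ^ p) ^ p := by
  rw [← Equiv.sum_comp (blockEquiv p).symm
    (fun c => if condC c then bernWeight q (p ^ 2) c else 0)]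
  have hC : ∀ d : Fin p → Fin p → Bool,
      condC ((blockEquiv p).symm d) ↔ ∀ v t t' : Fin p, d v t = d v t' := by
    intro d
    unfold condC
    constructor <;> intro h v t t'
    · rw [← blockEquiv_symm_apply d v t, ← blockEquiv_symm_apply d v t']
      exact h v t t'
    · rw [blockEquiv_symm_apply, blockEquiv_symm_apply] at *
      exact h v t t'
  have step : ∀ d : Fin p → Fin p → Bool,
      (if condC ((blockEquiv p).symm d) then bernWeight q (p ^ 2) ((blockEquiv p).symm d) else 0)
      = ∏ v : Fin p, if (∀ t t' : Fin p, d v t = d v t')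
          then ∏ t : Fin p, (if d v t then q else 1 - q) else 0 := by
    intro d
    rw [if_congr (hC d) (bernWeight_block q d) rfl]
    exact ite_forall_prod (fun v => ∀ t t' : Fin p, d v t = d v t') _
  rw [Finset.sum_congr rfl (fun d _ => step d)]
  have hswap : (∑ d : Fin p → Fin p → Bool, ∏ v : Fin p,
      if (∀ t t' : Fin p, d v t = d v t') then ∏ t : Fin p, (if d v t then q else 1 - q) else 0)
      = ∏ v : Fin p, ∑ blk : Fin p → Bool,
        (if (∀ t t' : Fin p, blk t = blk t')
          then ∏ t : Fin p, (if blk t then q else 1 - q) else 0) :=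
    sum_prod_swap (ι := Fin p) (κ := Fin p → Bool) (fun _ blk => if ∀ t t' : Fin p, blk t = blk t'
      then ∏ t : Fin p, (if blk t then q else 1 - q) else 0)
  rw [hswap]
  have hfactor : ∀ v : Fin p, (∑ blk : Fin p → Bool,
      if (∀ t t' : Fin p, blk t = blk t') then ∏ t : Fin p, (if blk t then q else 1 - q) else 0)
      = q ^ p + (1 - q) ^ p := by
    intro v
    have hconst : ∀ blk : Fin p → Bool, (∀ t t' : Fin p, blk t = blk t')
        ↔ (blk = fun _ => true) ∨ (blk = fun _ => false) := by
      intro blk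
      constructor
      · intro h
        by_cases hb : blk ⟨0, hp⟩ = true
        · left; funext t; rw [h t ⟨0, hp⟩, hb]
        · right; funext t; rw [h t ⟨0, hp⟩]; exact Bool.not_eq_true _ |>.mp hb
      · rintro (rfl | rfl) t t' <;> rfl
    have hne : (fun _ : Fin p => true) ≠ (fun _ : Fin p => false) := by
      intro h
      have := congrFun h ⟨0, hp⟩
      simp at this
    calc (∑ blk : Fin p → Bool,
        if (∀ t t' : Fin p, blk t = blk t') then ∏ t : Fin p, (if blk t then q else 1 - q) else 0)
        = ∑ blk : Fin p → Bool,
          ((if blk = (fun _ => true) then ∏ t : Fin p, (if blk t then q else 1 - q) else 0)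
          + (if blk = (fun _ => false) then ∏ t : Fin p, (if blk t then q else 1 - q) else 0)) := by
          refine Finset.sum_congr rfl fun blk _ => ?_
          by_cases h1 : blk = fun _ => true
          · rw [if_pos ((hconst blk).mpr (Or.inl h1)), if_pos h1, if_neg (by rw [h1]; exact hne)]
            ring
          · by_cases h2 : blk = fun _ => false
            · rw [if_pos ((hconst blk).mpr (Or.inr h2)), if_pos h2, if_neg h1]
              ring
            · have hcond : ¬ (∀ t t' : Fin p, blk t = blk t') := by
                intro h
                rcases (hconst blk).mp h with h' | h'
                · exact h1 h'
                · exact h2 h'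
              rw [if_neg hcond, if_neg h1, if_neg h2]
              ring
      _ = q ^ p + (1 - q) ^ p := by
          rw [Finset.sum_add_distrib, Finset.sum_ite_eq' univ (fun _ => true),
            Finset.sum_ite_eq' univ (fun _ => false), if_pos (mem_univ _), if_pos (mem_univ _)]
          simp
  rw [Finset.prod_congr rfl (fun v _ => hfactor v), Finset.prod_const, Finset.card_univ,
    Fintype.card_fin]


lemma cnt_le {p : ℕ} (c : Fin (p ^ 2) → Bool) (v : Fin p) : cnt c v ≤ p := by
  unfold cnt
  calc (univ.filter (fun t : Fin p => c (idx v t) = true)).card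
      ≤ (univ : Finset (Fin p)).card := Finset.card_filter_le _ _
    _ = p := by rw [Finset.card_univ, Fintype.card_fin]

lemma sum_condB (q : ℝ) {p : ℕ} (hp : 0 < p) :
    (∑ c : Fin (p ^ 2) → Bool, if condB c then bernWeight q (p ^ 2) c else 0)
      = ∑ k ∈ Finset.range (p + 1), phi q k p ^ p := by
  have hpt : ∀ c : Fin (p ^ 2) → Bool,
      (if condB c then bernWeight q (p ^ 2) c else 0)
      = ∑ k ∈ Finset.range (p + 1), (if ∀ v : Fin p, cnt c v = k
          then bernWeight q (p ^ 2) c else 0) := by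
    intro c
    by_cases hB : condB c
    · rw [if_pos hB]
      have hcongr : ∀ k ∈ Finset.range (p + 1), (if ∀ v : Fin p, cnt c v = k
          then bernWeight q (p ^ 2) c else 0)
          = (if k = cnt c ⟨0, hp⟩ then bernWeight q (p ^ 2) c else 0) := by
        intro k _
        refine if_congr ?_ rfl rfl
        constructor
        · intro h; rw [← h ⟨0, hp⟩]
        · intro h v; rw [h]; exact hB v ⟨0, hp⟩
      rw [Finset.sum_congr rfl hcongr, Finset.sum_ite_eq' _ (cnt c ⟨0, hp⟩),
        if_pos (Finset.mem_range.mpr (Nat.lt_succ_of_le (cnt_le c ⟨0, hp⟩)))]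
    · rw [if_neg hB]
      symm
      refine Finset.sum_eq_zero fun k _ => ?_
      rw [if_neg]
      intro h
      exact hB (fun v w => by rw [h v, h w])
  rw [Finset.sum_congr rfl (fun c _ => hpt c), Finset.sum_comm]
  refine Finset.sum_congr rfl fun k _ => ?_
  rw [← Equiv.sum_comp (blockEquiv p).symm
    (fun c => if (∀ v : Fin p, cnt c v = k) then bernWeight q (p ^ 2) c else 0)]
  have step : ∀ d : Fin p → Fin p → Bool,
      (if (∀ v : Fin p, cnt ((blockEquiv p).symm d) v = k)
          then bernWeight q (p ^ 2) ((blockEquiv p).symm d) else 0)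
      = ∏ v : Fin p, (if (univ.filter (fun t => d v t = true)).card = k
          then ∏ t : Fin p, (if d v t then q else 1 - q) else 0) := by
    intro d
    have hiff : (∀ v : Fin p, cnt ((blockEquiv p).symm d) v = k) ↔
        (∀ v : Fin p, (univ.filter (fun t => d v t = true)).card = k) := by
      constructor <;> intro h v
      · rw [← cnt_block d v]; exact h v
      · rw [cnt_block d v]; exact h v
    rw [if_congr hiff (bernWeight_block q d) rfl]
    exact ite_forall_prod (fun v => (univ.filter (fun t => d v t = true)).card = k) _
  rw [Finset.sum_congr rfl (fun d _ => step d)]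
  have hswap : (∑ d : Fin p → Fin p → Bool,
      ∏ v : Fin p, (if (univ.filter (fun t => d v t = true)).card = k
        then ∏ t : Fin p, (if d v t then q else 1 - q) else 0))
      = ∏ v : Fin p, ∑ blk : Fin p → Bool,
        (if (univ.filter (fun t => blk t = true)).card = k
          then ∏ t : Fin p, (if blk t then q else 1 - q) else 0) :=
    sum_prod_swap (ι := Fin p) (κ := Fin p → Bool)
      (fun _ blk => if (univ.filter (fun t => blk t = true)).card = k
        then ∏ t : Fin p, (if blk t then q else 1 - q) else 0)
  rw [hswap]
  have hfac : ∀ v : Fin p, (∑ blk : Fin p → Bool,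
      (if (univ.filter (fun t => blk t = true)).card = k
        then ∏ t : Fin p, (if blk t then q else 1 - q) else 0)) = phi q k p := by
    intro v
    have h1 : ∀ blk : Fin p → Bool,
        (if (univ.filter (fun t => blk t = true)).card = k
          then ∏ t : Fin p, (if blk t then q else 1 - q) else 0)
        = (if (univ.filter (fun t => blk t = true)).card = k
          then q ^ k * (1 - q) ^ (p - k) else 0) := by
      intro blk
      by_cases h : (univ.filter (fun t => blk t = true)).card = k
      · rw [if_pos h, if_pos h, ← prod_ite_weight, bernWeight, h]
      · rw [if_neg h, if_neg h]
    rw [Finset.sum_congr rfl (fun blk _ => h1 blk), sum_count_eq, phi]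
    ring
  rw [Finset.prod_congr rfl (fun v _ => hfac v), Finset.prod_const, Finset.card_univ,
    Fintype.card_fin]

lemma condBC_iff {p : ℕ} (hp : 0 < p) (c : Fin (p ^ 2) → Bool) :
    (condB c ∧ condC c) ↔ (c = fun _ => true) ∨ (c = fun _ => false) := by
  constructor
  · rintro ⟨hB, hC⟩
    have hcnt : ∀ v : Fin p, cnt c v = if c (idx v ⟨0, hp⟩) then p else 0 := by
      intro v
      unfold cnt
      by_cases h : c (idx v ⟨0, hp⟩) = true
      · rw [if_pos h, Finset.filter_true_of_mem (fun t _ => by rw [hC v t ⟨0, hp⟩]; exact h),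
          Finset.card_univ, Fintype.card_fin]
      · rw [if_neg h, Finset.filter_eq_empty_iff.mpr
          (fun t _ => by rw [hC v t ⟨0, hp⟩]; exact h), Finset.card_empty]
    have hsame : ∀ v : Fin p, c (idx v ⟨0, hp⟩) = c (idx ⟨0, hp⟩ ⟨0, hp⟩) := by
      intro v
      have h := hB v ⟨0, hp⟩
      rw [hcnt, hcnt] at h
      by_cases h1 : c (idx v ⟨0, hp⟩) = true <;> by_cases h2 : c (idx ⟨0, hp⟩ ⟨0, hp⟩) = true
      · rw [h1, h2]
      · rw [if_pos h1, if_neg h2] at h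
        omega
      · rw [if_neg h1, if_pos h2] at h
        omega
      · rw [Bool.not_eq_true] at h1 h2
        rw [h1, h2]
    have hall : ∀ m : Fin (p ^ 2), c m = c (idx ⟨0, hp⟩ ⟨0, hp⟩) := by
      intro m
      obtain ⟨x, rfl⟩ : ∃ x : Fin p × Fin p, pairEquiv p x = m :=
        ⟨(pairEquiv p).symm m, Equiv.apply_symm_apply _ _⟩
      rw [pairEquiv_apply, hC x.2 x.1 ⟨0, hp⟩, hsame x.2]
    by_cases hb : c (idx ⟨0, hp⟩ ⟨0, hp⟩) = true
    · left; funext m; rw [hall m, hb]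
    · right; funext m; rw [hall m]; exact Bool.not_eq_true _ |>.mp hb
  · rintro (rfl | rfl)
    · exact ⟨fun v w => rfl, fun v t t' => rfl⟩
    · exact ⟨fun v w => rfl, fun v t t' => rfl⟩

lemma sum_BC (q : ℝ) {p : ℕ} (hp : 0 < p) :
    (∑ c : Fin (p ^ 2) → Bool, if condB c ∧ condC c then bernWeight q (p ^ 2) c else 0)
      = q ^ (p ^ 2) + (1 - q) ^ (p ^ 2) := by
  have hp2 : 0 < p ^ 2 := pow_pos hp 2
  have hne : (fun _ : Fin (p ^ 2) => true) ≠ (fun _ => false) := by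
    intro h
    have := congrFun h ⟨0, hp2⟩
    simp at this
  have hpt : ∀ c : Fin (p ^ 2) → Bool,
      (if condB c ∧ condC c then bernWeight q (p ^ 2) c else 0)
      = (if c = (fun _ => true) then bernWeight q (p ^ 2) c else 0)
        + (if c = (fun _ => false) then bernWeight q (p ^ 2) c else 0) := by
    intro c
    rw [if_congr (condBC_iff hp c) rfl rfl]
    by_cases h1 : c = fun _ => true
    · rw [if_pos (Or.inl h1), if_pos h1, if_neg (by rw [h1]; exact hne)]; ring
    · by_cases h2 : c = fun _ => false
      · rw [if_pos (Or.inr h2), if_neg h1, if_pos h2]; ring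
      · rw [if_neg (by rintro (h | h); exacts [h1 h, h2 h]), if_neg h1, if_neg h2]; ring
  rw [Finset.sum_congr rfl (fun c _ => hpt c), Finset.sum_add_distrib,
    Finset.sum_ite_eq' univ (fun _ : Fin (p ^ 2) => true) (fun c => bernWeight q (p ^ 2) c),
    Finset.sum_ite_eq' univ (fun _ : Fin (p ^ 2) => false) (fun c => bernWeight q (p ^ 2) c),
    if_pos (mem_univ _), if_pos (mem_univ _)]
  have h1 : bernWeight q (p ^ 2) (fun _ => true) = q ^ (p ^ 2) := by
    rw [prod_ite_weight]
    simp
  have h2 : bernWeight q (p ^ 2) (fun _ => false) = (1 - q) ^ (p ^ 2) := by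
    rw [prod_ite_weight]
    simp
  rw [h1, h2]

end PqAux

/-- Lemma 3.2 (2): for p prime and q ∈ (0,1),
P_q(p²) = (q^p + (1-q)^p)^p + ∑_{k=0}^p φ_q(k,p)^p − q^{p²} − (1-q)^{p²}. -/
theorem Pq_prime_sq (p : ℕ) (hp : p.Prime) (q : ℝ) (hq0 : 0 < q) (hq1 : q < 1) :
    Pq q (p ^ 2) =
      (q ^ p + (1 - q) ^ p) ^ p + (∑ k ∈ Finset.range (p + 1), phi q k p ^ p)
        - q ^ (p ^ 2) - (1 - q) ^ (p ^ 2) := by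
  have hp0 : 0 < p := hp.pos
  have hp2 : 0 < p ^ 2 := pow_pos hp0 2
  unfold Pq
  have hiff : ∀ c : Fin (p ^ 2) → Bool,
      ((Matrix.of fun i j : Fin (p ^ 2) => (if c (j - i) then (1 : ℚ) else 0)).det = 0)
        ↔ (PqAux.condB c ∨ PqAux.condC c) := fun c =>
    (PqAux.det_circ_eq_zero_iff hp2 c).trans (PqAux.roots_iff_BC hp c)
  have hpt : ∀ c : Fin (p ^ 2) → Bool,
      (if (Matrix.of fun i j : Fin (p ^ 2) => (if c (j - i) then (1 : ℚ) else 0)).det = 0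
        then bernWeight q (p ^ 2) c else 0)
      = (if PqAux.condB c then bernWeight q (p ^ 2) c else 0)
        + (if PqAux.condC c then bernWeight q (p ^ 2) c else 0)
        - (if PqAux.condB c ∧ PqAux.condC c then bernWeight q (p ^ 2) c else 0) := by
    intro c
    rw [if_congr (hiff c) rfl rfl]
    by_cases hB : PqAux.condB c <;> by_cases hC : PqAux.condC c
    · rw [if_pos (Or.inl hB), if_pos hB, if_pos hC, if_pos ⟨hB, hC⟩]; ring
    · rw [if_pos (Or.inl hB), if_pos hB, if_neg hC, if_neg (fun h => hC h.2)]; ring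
    · rw [if_pos (Or.inr hC), if_neg hB, if_pos hC, if_neg (fun h => hB h.1)]; ring
    · rw [if_neg (by rintro (h | h); exacts [hB h, hC h]), if_neg hB, if_neg hC,
        if_neg (fun h => hB h.1)]; ring
  rw [Finset.sum_congr rfl (fun c _ => hpt c), Finset.sum_sub_distrib, Finset.sum_add_distrib,
    PqAux.sum_condB q hp0, PqAux.sum_condC q hp0, PqAux.sum_BC q hp0]
  ring
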